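/- Every non-expansive bijection f : X → X is the identity map on X. -/

import Mathlib

open MeasureTheory

theorem stmt0
    (a b : ℕ → ℝ)
    (hlt : ∀ n, a n < b n)
    (haq : ∀ n, ∃ q : ℚ, (q : ℝ) = a n)
    (hbq : ∀ n, ∃ q : ℚ, (q : ℝ) = b n)
    (hdisj : ∀ i j, i ≠ j → Disjoint (Set.Icc (a i) (b i)) (Set.Icc (a j) (b j)))
    (hhalf : ∀ n, 2 * (b (n + 1) - a (n + 1)) < b n - a n)
    (hgap : ∀ i j, b i < a j → a j - b i > b 0 - a 0)
    (h01 : a 0 < a 1)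
    (hcof : ∀ x : ℝ, ∃ k l, b k < x ∧ x < a l)
    (m : ℕ → ℕ)
    (hm : ∀ n, b n < a (m n))
    (hmgap : ∀ n, Disjoint (Set.Ioo (b n) (a (m n))) (⋃ k, Set.Icc (a k) (b k)))
    (A : ℕ → Set ℝ)
    (hA : ∀ n, A n ⊆ Set.Ioo (b n) (a (m n)))
    (hAcard : ∀ n, ∀ U : Set ℝ, IsOpen U → U.Nonempty → U ⊆ Set.Ioo (b n) (a (m n)) →
      Cardinal.mk ↥(A n ∩ U) = Cardinal.aleph 1)
    (X : Set ℝ)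
    (hX : X = ⋃ n, (({x : ℝ | ∃ q : ℚ, (q : ℝ) = x} ∩ Set.Icc (a n) (b n)) ∪ A n))
    (f : ℝ → ℝ)
    (hbij : Set.BijOn f X X)
    (hne : ∀ x ∈ X, ∀ y ∈ X, |f x - f y| ≤ |x - y|) :
    ∀ x ∈ X, f x = x := by
  -- basic length facts
  have hlpos : ∀ n, 0 < b n - a n := fun n => sub_pos.2 (hlt n)
  have hl0 : 0 < b 0 - a 0 := hlpos 0
  have hpow : ∀ n j, 2 ^ j * (b (n + j) - a (n + j)) ≤ b n - a n := by
    intro n j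
    induction j with
    | zero => simp
    | succ j ih =>
      have h2 : (0:ℝ) ≤ 2 ^ j := by positivity
      have h := hhalf (n + j)
      calc 2 ^ (j+1) * (b (n + (j+1)) - a (n + (j+1)))
          = 2 ^ j * (2 * (b (n + j + 1) - a (n + j + 1))) := by ring
        _ ≤ 2 ^ j * (b (n + j) - a (n + j)) := by
            exact mul_le_mul_of_nonneg_left (le_of_lt h) h2
        _ ≤ b n - a n := ih
  have hble : ∀ n j, b (n + j) - a (n + j) ≤ (b n - a n) * (1/2) ^ j := by
    intro n j
    have h := hpow n j
    have h2 : (0:ℝ) < 2 ^ j := by positivity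
    rw [div_pow, one_pow, mul_div_assoc']
    rw [le_div_iff₀ h2]
    linarith [h]
  have hsummable : Summable (fun n => b n - a n) := by
    apply Summable.of_nonneg_of_le (fun n => le_of_lt (hlpos n)) ?_
      ((summable_geometric_two).mul_left (b 0 - a 0))
    intro n
    have h := hble 0 n
    rwa [Nat.zero_add] at h
  -- pairwise order of intervals
  have haij : ∀ i j, i ≠ j → b i < a j ∨ b j < a i := by
    intro i j hij
    by_contra h
    push_neg at h
    obtain ⟨h1, h2⟩ := h
    have : max (a i) (a j) ∈ Set.Icc (a i) (b i) ∩ Set.Icc (a j) (b j) := by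
      constructor
      · exact ⟨le_max_left _ _, max_le (le_of_lt (hlt i)) h1⟩
      · exact ⟨le_max_right _ _, max_le h2 (le_of_lt (hlt j))⟩
    exact (hdisj i j hij).le_bot this
  have hIccG : ∀ k n, ∀ x, x ∈ Set.Ioo (b k) (a (m k)) → x ∉ Set.Icc (a n) (b n) := by
    intro k n x hx hx2
    exact (hmgap k).le_bot ⟨hx, Set.mem_iUnion.2 ⟨n, hx2⟩⟩
  have hleft : ∀ k x, a k - (b 0 - a 0) < x → x < a k → ∀ j, x ∉ Set.Icc (a j) (b j) := by
    intro k x h1 h2 j hj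
    rcases eq_or_ne j k with rfl | hjk
    · exact absurd hj.1 (not_le.2 h2)
    rcases haij j k hjk with h | h
    · have := hgap j k h
      have := hj.2
      linarith
    · have := hj.1
      have := hlt k
      linarith
  -- covering of ℝ
  have hstep : ∀ n, a n + (b 0 - a 0) < a (m n) := by
    intro n
    have h1 := hgap n (m n) (hm n)
    have h2 := hlt n
    linarith
  have cover : ∀ x : ℝ, ∃ n, x ∈ Set.Icc (a n) (b n) ∨ x ∈ Set.Icc (b n) (a (m n)) := by
    intro x
    obtain ⟨k, l, hbk, _⟩ := hcof x
    have hak : a k < x := lt_trans (hlt k) hbk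
    have key : ∀ j n, a n ≤ x → x < a (m^[j] n) →
        ∃ i, x ∈ Set.Icc (a i) (b i) ∨ x ∈ Set.Icc (b i) (a (m i)) := by
      intro j
      induction j with
      | zero => intro n h1 h2; simp at h2; exact absurd h1 (not_le.2 h2)
      | succ j ih =>
        intro n h1 h2
        by_cases hc : x < a (m n)
        · refine ⟨n, ?_⟩
          by_cases hb : x ≤ b n
          · exact Or.inl ⟨h1, hb⟩
          · exact Or.inr ⟨le_of_not_ge hb, le_of_lt hc⟩
        · apply ih (m n) (le_of_not_gt hc)
          rwa [Function.iterate_succ_apply] at h2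
    have hgrow : ∀ j, a k + j * (b 0 - a 0) ≤ a (m^[j] k) := by
      intro j
      induction j with
      | zero => simp
      | succ j ih =>
        rw [Function.iterate_succ_apply']
        have := hstep (m^[j] k)
        push_cast
        nlinarith
    obtain ⟨j, hj⟩ := exists_nat_gt ((x - a k) / (b 0 - a 0))
    have hj2 : x - a k < j * (b 0 - a 0) := by
      rw [div_lt_iff₀ hl0] at hj
      linarith
    exact key j k (le_of_lt hak) (lt_of_lt_of_le (by linarith [hgrow j]) (hgrow j))
  -- membership facts about X
  have hXmem : ∀ x ∈ X, ∃ n, ((∃ q : ℚ, (q:ℝ) = x) ∧ x ∈ Set.Icc (a n) (b n)) ∨ x ∈ A n := by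
    intro x hx
    rw [hX] at hx
    obtain ⟨n, hn⟩ := Set.mem_iUnion.1 hx
    rcases hn with h | h
    · exact ⟨n, Or.inl ⟨h.1, h.2⟩⟩
    · exact ⟨n, Or.inr h⟩
  have hXsub2 : ∀ x ∈ X, ∃ n, x ∈ Set.Icc (a n) (b n) ∨ x ∈ Set.Ioo (b n) (a (m n)) := by
    intro x hx
    obtain ⟨n, h | h⟩ := hXmem x hx
    · exact ⟨n, Or.inl h.2⟩
    · exact ⟨n, Or.inr (hA n h)⟩
  have hQX : ∀ (n : ℕ) (q : ℚ), (q:ℝ) ∈ Set.Icc (a n) (b n) → (q:ℝ) ∈ X := by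
    intro n q hq
    rw [hX]
    exact Set.mem_iUnion.2 ⟨n, Or.inl ⟨⟨q, rfl⟩, hq⟩⟩
  have hAXn : ∀ n, A n ⊆ X := by
    intro n x hx
    rw [hX]
    exact Set.mem_iUnion.2 ⟨n, Or.inr hx⟩
  -- uncountability in gaps
  have huncount : ∀ (n : ℕ) (U : Set ℝ), IsOpen U → U.Nonempty →
      U ⊆ Set.Ioo (b n) (a (m n)) → ¬ (X ∩ U).Countable := by
    intro n U hU hUne hUsub hcnt
    have h1 : (A n ∩ U).Countable := hcnt.mono (Set.inter_subset_inter_left U (hAXn n))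
    have h2 : Cardinal.mk ↥(A n ∩ U) ≤ Cardinal.aleph0 :=
      Cardinal.mk_le_aleph0_iff.2 (Set.countable_coe_iff.2 h1)
    rw [hAcard n U hU hUne hUsub] at h2
    have h3 : Cardinal.aleph0 < Cardinal.aleph 1 := by
      rw [← Cardinal.aleph_zero]; exact Cardinal.aleph_lt_aleph.2 zero_lt_one
    exact absurd h2 (not_le.2 h3)
  -- X is countable inside the open intervals
  have hlight : ∀ n, (X ∩ Set.Ioo (a n) (b n)).Countable := by
    intro n
    apply Set.Countable.mono ?_ (Set.countable_range (fun q : ℚ => (q:ℝ)))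
    rintro x ⟨hxX, hxI⟩
    obtain ⟨j, h | h⟩ := hXmem x hxX
    · obtain ⟨q, hq⟩ := h.1
      exact ⟨q, hq⟩
    · exact absurd (Set.Ioo_subset_Icc_self hxI) (hIccG j n x (hA j h))
  -- the set of condensation points
  set P : Set ℝ := {x : ℝ | ∀ ε : ℝ, 0 < ε → ¬ (X ∩ Set.Ioo (x - ε) (x + ε)).Countable}
    with hPdef
  have hPIoo : ∀ n x, x ∈ Set.Ioo (a n) (b n) → x ∉ P := by
    intro n x hx hxP
    have hε : 0 < min (x - a n) (b n - x) := lt_min (by linarith [hx.1]) (by linarith [hx.2])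
    apply hxP _ hε
    apply (hlight n).mono
    intro y ⟨hyX, hyI⟩
    refine ⟨hyX, ?_, ?_⟩
    · have := hyI.1; have : x - (x - a n) ≤ x - min (x - a n) (b n - x) := by
        have := min_le_left (x - a n) (b n - x); linarith
      linarith [hyI.1, min_le_left (x - a n) (b n - x)]
    · linarith [hyI.2, min_le_right (x - a n) (b n - x)]
  have hPGcc : ∀ n x, x ∈ Set.Icc (b n) (a (m n)) → x ∈ P := by
    intro n x hx ε hε hcnt
    set U := Set.Ioo (max (b n) (x - ε)) (min (a (m n)) (x + ε)) with hUdef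
    have hne1 : max (b n) (x - ε) < min (a (m n)) (x + ε) := by
      rcases hx with ⟨hx1, hx2⟩
      rw [max_lt_iff]
      constructor <;> rw [lt_min_iff] <;> constructor
      · exact hm n
      · linarith
      · linarith
      · linarith
    apply huncount n U isOpen_Ioo (Set.nonempty_Ioo.2 hne1) ?_ ?_
    · intro y hy
      exact ⟨lt_of_le_of_lt (le_max_left _ _) hy.1, lt_of_lt_of_le hy.2 (min_le_left _ _)⟩
    · apply hcnt.mono
      apply Set.inter_subset_inter_right
      intro y hy
      exact ⟨lt_of_le_of_lt (le_max_right _ _) hy.1, lt_of_lt_of_le hy.2 (min_le_right _ _)⟩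
  have haP : ∀ n, a n ∈ P := by
    intro n ε hε hcnt
    set δ := min ε (b 0 - a 0) with hδdef
    have hδ : 0 < δ := lt_min hε hl0
    have hδ2 : δ ≤ b 0 - a 0 := min_le_right _ _
    have hδ3 : δ ≤ ε := min_le_left _ _
    set u := a n - δ/2 with hudef
    have hu1 : a n - (b 0 - a 0) < u := by simp only [hudef]; linarith
    have hu2 : u < a n := by simp only [hudef]; linarith
    obtain ⟨k, hk⟩ := cover u
    rcases hk with hk | hk
    · exact absurd hk (hleft n u hu1 hu2 k)
    have hk2 : a (m k) ≤ a n := by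
      by_contra hcon
      push_neg at hcon
      have hbk : b k < a n := lt_of_le_of_lt hk.1 hu2
      exact hIccG k n (a n) ⟨hbk, hcon⟩ ⟨le_refl _, le_of_lt (hlt n)⟩
    set U := Set.Ioo (max (b k) (a n - δ)) (a (m k)) with hUdef
    have hne1 : max (b k) (a n - δ) < a (m k) := by
      rw [max_lt_iff]
      constructor
      · exact hm k
      · have : a n - δ < u := by simp only [hudef]; linarith
        linarith [hk.2]
    apply huncount k U isOpen_Ioo (Set.nonempty_Ioo.2 hne1) ?_ ?_
    · intro y hy
      exact ⟨lt_of_le_of_lt (le_max_left _ _) hy.1, hy.2⟩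
    · apply hcnt.mono
      apply Set.inter_subset_inter_right
      intro y hy
      constructor
      · have := le_max_right (b k) (a n - δ); linarith [hy.1]
      · have := hy.2; linarith
  have hVP : ∀ x : ℝ, x ∉ (⋃ n, Set.Ioo (a n) (b n)) → x ∈ P := by
    intro x hx
    obtain ⟨n, hn | hn⟩ := cover x
    · rcases eq_or_lt_of_le hn.1 with heq | hlt1
      · rw [← heq]; exact haP n
      rcases eq_or_lt_of_le hn.2 with heq | hlt2
      · rw [heq]; exact hPGcc n (b n) ⟨le_refl _, le_of_lt (hm n)⟩
      · exact absurd (show x ∈ ⋃ n, Set.Ioo (a n) (b n) from Set.mem_iUnion.2 ⟨n, Set.mem_Ioo.2 ⟨hlt1, hlt2⟩⟩) hx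
    · exact hPGcc n x hn
  -- Lipschitz extension of f
  have hlipon : LipschitzOnWith 1 f X := by
    rw [lipschitzOnWith_iff_dist_le_mul]
    intro x hx y hy
    rw [Real.dist_eq, Real.dist_eq]
    simpa using hne x hx y hy
  obtain ⟨F, hFlip, hFeqX⟩ := hlipon.extend_real
  have hF1 : ∀ x y : ℝ, |F x - F y| ≤ |x - y| := by
    intro x y
    have := hFlip.dist_le_mul x y
    rwa [Real.dist_eq, Real.dist_eq, NNReal.coe_one, one_mul] at this
  have hFc : Continuous F := hFlip.continuous
  have hFX : ∀ x ∈ X, F x ∈ X := by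
    intro x hx
    rw [← hFeqX hx]
    exact hbij.mapsTo hx
  have hFinj : Set.InjOn F X := by
    intro x hx y hy h
    apply hbij.injOn hx hy
    rw [hFeqX hx, hFeqX hy]
    exact h
  -- F preserves condensation points
  have hFP : ∀ x ∈ P, F x ∈ P := by
    intro x hx ε hε hcnt
    apply hx ε hε
    have himg : F '' (X ∩ Set.Ioo (x - ε) (x + ε)) ⊆ X ∩ Set.Ioo (F x - ε) (F x + ε) := by
      rintro y ⟨z, ⟨hzX, hzI⟩, rfl⟩
      refine ⟨hFX z hzX, ?_⟩
      have h1 : |z - x| < ε := by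
        rw [abs_lt]; constructor <;> [linarith [hzI.1]; linarith [hzI.2]]
      have h2 : |F z - F x| < ε := lt_of_le_of_lt (hF1 z x) h1
      rw [abs_lt] at h2
      constructor <;> [linarith [h2.1]; linarith [h2.2]]
    have hcnt2 : (F '' (X ∩ Set.Ioo (x - ε) (x + ε))).Countable := hcnt.mono himg
    have hinj2 : Set.InjOn F (X ∩ Set.Ioo (x - ε) (x + ε)) :=
      hFinj.mono Set.inter_subset_left
    have := Cardinal.mk_image_eq_of_injOn F _ hinj2
    rw [← Set.countable_coe_iff, ← Cardinal.mk_le_aleph0_iff] at hcnt2 ⊢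
    rwa [this] at hcnt2
  -- every open interval (a k, b k) is in the range of F
  have hVrange : ∀ k, ∀ v ∈ Set.Ioo (a k) (b k), v ∈ Set.range F := by
    intro k v hv
    obtain ⟨q1, hq1⟩ := exists_rat_btwn hv.1
    obtain ⟨q2, hq2⟩ := exists_rat_btwn hv.2
    have hq1X : (q1:ℝ) ∈ X := hQX k q1 ⟨le_of_lt hq1.1, le_of_lt (lt_trans hq1.2 hv.2)⟩
    have hq2X : (q2:ℝ) ∈ X := hQX k q2 ⟨le_of_lt (lt_trans hv.1 hq2.1), le_of_lt hq2.2⟩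
    obtain ⟨x1, hx1X, hfx1⟩ := hbij.surjOn hq1X
    obtain ⟨x2, hx2X, hfx2⟩ := hbij.surjOn hq2X
    have hFx1 : F x1 = q1 := by rw [← hFeqX hx1X]; exact hfx1
    have hFx2 : F x2 = q2 := by rw [← hFeqX hx2X]; exact hfx2
    have hmem : v ∈ Set.uIcc (F x1) (F x2) := by
      rw [hFx1, hFx2, Set.uIcc_of_le (by linarith [hq1.2, hq2.1] : (q1:ℝ) ≤ q2)]
      exact ⟨le_of_lt hq1.2, le_of_lt hq2.1⟩
    obtain ⟨t, _, ht⟩ := intermediate_value_uIcc (hFc.continuousOn) hmem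
    exact ⟨t, ht⟩
  -- the images J n
  set J : ℕ → Set ℝ := fun n => F '' (Set.Ioo (a n) (b n)) with hJdef
  set V : Set ℝ := ⋃ n, Set.Ioo (a n) (b n) with hVdef
  have hJcover : ∀ k, ∀ v ∈ Set.Ioo (a k) (b k), ∃ n, v ∈ J n := by
    intro k v hv
    obtain ⟨t, ht⟩ := hVrange k v hv
    by_cases hc : t ∈ V
    · obtain ⟨n, hn⟩ := Set.mem_iUnion.1 hc
      exact ⟨n, ⟨t, hn, ht⟩⟩
    · have := hFP t (hVP t hc)
      rw [ht] at this
      exact absurd this (hPIoo k v hv)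
  have hJvol : ∀ n, volume (J n) ≤ ENNReal.ofReal (b n - a n) := by
    intro n
    have hsub : J n ⊆ Set.Icc (F ((a n + b n)/2) - (b n - a n)/2)
        (F ((a n + b n)/2) + (b n - a n)/2) := by
      rintro y ⟨t, htI, rfl⟩
      have h1 : |t - (a n + b n)/2| ≤ (b n - a n)/2 := by
        rw [abs_le]; constructor <;> [linarith [htI.1]; linarith [htI.2]]
      have h2 := le_trans (hF1 t ((a n + b n)/2)) h1
      rw [abs_le] at h2
      constructor <;> [linarith [h2.1]; linarith [h2.2]]
    calc volume (J n) ≤ volume (Set.Icc (F ((a n + b n)/2) - (b n - a n)/2)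
        (F ((a n + b n)/2) + (b n - a n)/2)) := measure_mono hsub
      _ = ENNReal.ofReal (b n - a n) := by rw [Real.volume_Icc]; congr 1; ring
  have hVvol : volume V = ∑' n, ENNReal.ofReal (b n - a n) := by
    rw [hVdef, measure_iUnion ?_ (fun n => measurableSet_Ioo)]
    · congr 1; funext n; exact Real.volume_Ioo
    · intro i j hij
      exact Set.disjoint_of_subset Set.Ioo_subset_Icc_self Set.Ioo_subset_Icc_self
        (hdisj i j hij)
  have hVfin : volume V ≠ ⊤ := by
    rw [hVvol, ← ENNReal.ofReal_tsum_of_nonneg (fun n => le_of_lt (hlpos n)) hsummable]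
    exact ENNReal.ofReal_ne_top
  have hJnull : ∀ n, volume (J n \ V) = 0 := by
    have hWle : volume (⋃ n, J n) ≤ volume V := by
      rw [hVvol]
      exact le_trans (measure_iUnion_le J) (ENNReal.tsum_le_tsum hJvol)
    have hVW : V ⊆ ⋃ n, J n := by
      intro v hv
      obtain ⟨k, hk⟩ := Set.mem_iUnion.1 hv
      obtain ⟨n, hn⟩ := hJcover k v hk
      exact Set.mem_iUnion.2 ⟨n, hn⟩
    have hd : volume ((⋃ n, J n) \ V) = volume (⋃ n, J n) - volume V :=
      measure_diff hVW (MeasurableSet.iUnion (fun n => measurableSet_Ioo)).nullMeasurableSet hVfin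
    have : volume ((⋃ n, J n) \ V) = 0 := by
      rw [hd]
      exact tsub_eq_zero_of_le hWle
    intro n
    exact measure_mono_null (Set.diff_subset_diff_left (Set.subset_iUnion J n)) this
  -- J n is order-convex
  have hJconv : ∀ n, ∀ u ∈ J n, ∀ v ∈ J n, Set.uIcc u v ⊆ J n := by
    rintro n u ⟨s, hs, rfl⟩ v ⟨t, ht, rfl⟩
    have h1 : Set.uIcc s t ⊆ Set.Ioo (a n) (b n) := (Set.ordConnected_Ioo).uIcc_subset hs ht
    intro y hy
    obtain ⟨w, hw, hwy⟩ := intermediate_value_uIcc (hFc.continuousOn) hy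
    exact ⟨w, h1 hw, hwy⟩
  -- every J n is contained in some interval [a k, b k]
  have hσex : ∀ n, ∃ k, J n ⊆ Set.Icc (a k) (b k) := by
    intro n
    obtain ⟨q1, hq1⟩ := exists_rat_btwn (hlt n)
    obtain ⟨q2, hq2⟩ := exists_rat_btwn hq1.2
    have hq1I : (q1:ℝ) ∈ Set.Ioo (a n) (b n) := ⟨hq1.1, lt_trans hq2.1 hq2.2⟩
    have hq2I : (q2:ℝ) ∈ Set.Ioo (a n) (b n) := ⟨lt_trans hq1.1 hq2.1, hq2.2⟩
    have hq1X : (q1:ℝ) ∈ X := hQX n q1 (Set.Ioo_subset_Icc_self hq1I)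
    have hq2X : (q2:ℝ) ∈ X := hQX n q2 (Set.Ioo_subset_Icc_self hq2I)
    have huJ : F q1 ∈ J n := ⟨_, hq1I, rfl⟩
    have hvJ : F q2 ∈ J n := ⟨_, hq2I, rfl⟩
    have huv : F (q1:ℝ) ≠ F (q2:ℝ) := by
      intro h
      exact absurd (hFinj hq1X hq2X h) (ne_of_lt hq2.1)
    obtain ⟨w1, w2, hw12, hw1J, hw2J, hIccJ⟩ :
        ∃ w1 w2 : ℝ, w1 < w2 ∧ w1 ∈ J n ∧ w2 ∈ J n ∧ Set.Icc w1 w2 ⊆ J n := by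
      rcases lt_or_gt_of_ne huv with h | h
      · exact ⟨_, _, h, huJ, hvJ, by
          rw [← Set.uIcc_of_le h.le]; exact hJconv n _ huJ _ hvJ⟩
      · exact ⟨_, _, h, hvJ, huJ, by
          rw [← Set.uIcc_of_ge h.le]; exact hJconv n _ huJ _ hvJ⟩
    have hwV : ∃ w ∈ Set.Icc w1 w2, w ∈ V := by
      by_contra hcon
      push_neg at hcon
      have hsub : Set.Icc w1 w2 ⊆ J n \ V := fun y hy => ⟨hIccJ hy, hcon y hy⟩
      have h0 := measure_mono_null hsub (hJnull n)
      rw [Real.volume_Icc, ENNReal.ofReal_eq_zero] at h0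
      linarith
    obtain ⟨w, hwIcc, hwV⟩ := hwV
    obtain ⟨k, hwk⟩ := Set.mem_iUnion.1 hwV
    have hwJ : w ∈ J n := hIccJ hwIcc
    refine ⟨k, fun z hz => ⟨?_, ?_⟩⟩
    · by_contra hcon
      push_neg at hcon
      have hzw : z < w := lt_trans hcon hwk.1
      have hIcczw : Set.Icc z w ⊆ J n := by
        rw [← Set.uIcc_of_le hzw.le]; exact hJconv n z hz w hwJ
      set η := min (a k - z) (b 0 - a 0) with hη
      have hηpos : 0 < η := lt_min (by linarith) hl0
      have hsub2 : Set.Ioo (a k - η) (a k) ⊆ J n \ V := by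
        intro y hy
        have hy1 : z ≤ y := by
          have h1 := min_le_left (a k - z) (b 0 - a 0)
          have := hy.1; linarith
        have hy2 : y ≤ w := le_of_lt (lt_trans hy.2 hwk.1)
        refine ⟨hIcczw ⟨hy1, hy2⟩, ?_⟩
        intro hyV
        obtain ⟨j, hj⟩ := Set.mem_iUnion.1 hyV
        apply hleft k y ?_ hy.2 j (Set.Ioo_subset_Icc_self hj)
        have h2 := min_le_right (a k - z) (b 0 - a 0)
        have := hy.1; linarith
      have h0 := measure_mono_null hsub2 (hJnull n)
      rw [Real.volume_Ioo, ENNReal.ofReal_eq_zero] at h0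
      linarith
    · by_contra hcon
      push_neg at hcon
      have hwz : w < z := lt_trans hwk.2 hcon
      have hIccwz : Set.Icc w z ⊆ J n := by
        rw [← Set.uIcc_of_le hwz.le]; exact hJconv n w hwJ z hz
      set η := min (z - b k) (b 0 - a 0) with hη
      have hηpos : 0 < η := lt_min (by linarith) hl0
      have hgk := hgap k (m k) (hm k)
      have hsub2 : Set.Ioo (b k) (b k + η) ⊆ J n \ V := by
        intro y hy
        have hy1 : w ≤ y := le_of_lt (lt_trans hwk.2 hy.1)
        have hy2 : y ≤ z := by
          have h1 := min_le_left (z - b k) (b 0 - a 0)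
          have := hy.2; linarith
        refine ⟨hIccwz ⟨hy1, hy2⟩, ?_⟩
        intro hyV
        obtain ⟨j, hj⟩ := Set.mem_iUnion.1 hyV
        apply hIccG k j y ?_ (Set.Ioo_subset_Icc_self hj)
        refine ⟨hy.1, ?_⟩
        have h2 := min_le_right (z - b k) (b 0 - a 0)
        have := hy.2; linarith
      have h0 := measure_mono_null hsub2 (hJnull n)
      rw [Real.volume_Ioo, ENNReal.ofReal_eq_zero] at h0
      linarith
  choose σ hσ using hσex
  -- σ is the identity
  have hσid : ∀ n, σ n = n := by
    intro n
    induction n using Nat.strong_induction_on with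
    | _ n ih =>
    by_contra hnen
    have hcov : Set.Ioo (a n) (b n) ⊆ ⋃ j : ℕ, J (n + 1 + j) := by
      intro v hv
      obtain ⟨i, hvJ⟩ := hJcover n v hv
      have hi : n + 1 ≤ i := by
        by_contra hile
        push_neg at hile
        have hin : i ≤ n := Nat.lt_succ_iff.1 hile
        rcases lt_or_eq_of_le hin with hin | rfl
        · have heq : σ i = i := ih i hin
          have h1 : v ∈ Set.Icc (a i) (b i) := heq ▸ hσ i hvJ
          exact (hdisj i n (Nat.ne_of_lt hin)).le_bot ⟨h1, Set.Ioo_subset_Icc_self hv⟩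
        · have h1 : v ∈ Set.Icc (a (σ i)) (b (σ i)) := hσ i hvJ
          exact (hdisj (σ i) i hnen).le_bot ⟨h1, Set.Ioo_subset_Icc_self hv⟩
      refine Set.mem_iUnion.2 ⟨i - (n+1), ?_⟩
      rwa [Nat.add_sub_cancel' hi]
    have h1 : ENNReal.ofReal (b n - a n) ≤
        ∑' j : ℕ, ENNReal.ofReal (b (n+1+j) - a (n+1+j)) := by
      calc ENNReal.ofReal (b n - a n) = volume (Set.Ioo (a n) (b n)) := Real.volume_Ioo.symm
        _ ≤ volume (⋃ j : ℕ, J (n + 1 + j)) := measure_mono hcov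
        _ ≤ ∑' j : ℕ, volume (J (n+1+j)) := measure_iUnion_le _
        _ ≤ ∑' j : ℕ, ENNReal.ofReal (b (n+1+j) - a (n+1+j)) :=
            ENNReal.tsum_le_tsum (fun j => hJvol _)
    have h2 : ∑' j : ℕ, ENNReal.ofReal (b (n+1+j) - a (n+1+j)) ≤
        ENNReal.ofReal ((b (n+1) - a (n+1)) * 2) := by
      calc ∑' j : ℕ, ENNReal.ofReal (b (n+1+j) - a (n+1+j))
          ≤ ∑' j : ℕ, ENNReal.ofReal ((b (n+1) - a (n+1)) * (1/2)^j) :=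
            ENNReal.tsum_le_tsum (fun j => ENNReal.ofReal_le_ofReal (hble (n+1) j))
        _ = ENNReal.ofReal (∑' j : ℕ, (b (n+1) - a (n+1)) * (1/2)^j) :=
            (ENNReal.ofReal_tsum_of_nonneg
              (fun j => mul_nonneg (le_of_lt (hlpos (n+1))) (by positivity))
              ((summable_geometric_two).mul_left _)).symm
        _ = ENNReal.ofReal ((b (n+1) - a (n+1)) * 2) := by
            rw [tsum_mul_left, tsum_geometric_two]
    have h3 := le_trans h1 h2
    rw [ENNReal.ofReal_le_ofReal_iff
      (mul_nonneg (le_of_lt (hlpos (n+1))) (by norm_num))] at h3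
    have := hhalf n
    linarith
  -- each open interval is inside its own image
  have hIooJ : ∀ k, Set.Ioo (a k) (b k) ⊆ J k := by
    intro k v hv
    obtain ⟨i, hi⟩ := hJcover k v hv
    have hsi : J i ⊆ Set.Icc (a i) (b i) := by
      have := hσ i; rwa [hσid i] at this
    rcases eq_or_ne i k with rfl | hik
    · exact hi
    · exact ((hdisj i k hik).le_bot ⟨hsi hi, Set.Ioo_subset_Icc_self hv⟩).elim
  -- F maps [a k, b k] onto itself
  have hsurjIcc : ∀ k, Set.Icc (a k) (b k) ⊆ F '' Set.Icc (a k) (b k) := by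
    intro k
    have hclosed : IsClosed (F '' Set.Icc (a k) (b k)) :=
      (isCompact_Icc.image hFc).isClosed
    have hsub : Set.Ioo (a k) (b k) ⊆ F '' Set.Icc (a k) (b k) :=
      subset_trans (hIooJ k) (Set.image_mono Set.Ioo_subset_Icc_self)
    calc Set.Icc (a k) (b k) = closure (Set.Ioo (a k) (b k)) :=
          (closure_Ioo (ne_of_lt (hlt k))).symm
      _ ⊆ F '' Set.Icc (a k) (b k) := closure_minimal hsub hclosed
  -- dichotomy: identity or reflection on each interval
  have hdich : ∀ k, (∀ u ∈ Set.Icc (a k) (b k), F u = u) ∨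
      (∀ u ∈ Set.Icc (a k) (b k), F u = a k + b k - u) := by
    intro k
    obtain ⟨s, hs, hFs⟩ := hsurjIcc k ⟨le_refl _, (hlt k).le⟩
    obtain ⟨t, ht, hFt⟩ := hsurjIcc k ⟨(hlt k).le, le_refl _⟩
    have h1 : b k - a k ≤ |s - t| := by
      have h := hF1 s t
      rw [hFs, hFt] at h
      calc b k - a k = |a k - b k| := by
            rw [abs_sub_comm, abs_of_nonneg (by linarith [hlt k])]
        _ ≤ |s - t| := h
    rcases le_total s t with hst | hst
    · have h2 : b k - a k ≤ t - s := by
        rwa [abs_sub_comm, abs_of_nonneg (sub_nonneg.2 hst)] at h1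
      have hsa : s = a k := le_antisymm (by linarith [ht.2]) hs.1
      have htb : t = b k := le_antisymm ht.2 (by linarith [hs.1])
      left
      intro u hu
      have e1 := hF1 u s
      rw [hFs, hsa, abs_of_nonneg (sub_nonneg.2 hu.1)] at e1
      have e2 := hF1 u t
      rw [hFt, htb, abs_sub_comm u (b k), abs_of_nonneg (sub_nonneg.2 hu.2)] at e2
      rw [abs_le] at e1 e2
      linarith [e1.1, e1.2, e2.1, e2.2]
    · have h2 : b k - a k ≤ s - t := by
        rwa [abs_of_nonneg (sub_nonneg.2 hst)] at h1
      have hsb : s = b k := le_antisymm hs.2 (by linarith [ht.1])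
      have hta : t = a k := le_antisymm (by linarith [hs.2]) ht.1
      right
      intro u hu
      have e1 := hF1 u s
      rw [hFs, hsb, abs_sub_comm u (b k), abs_of_nonneg (sub_nonneg.2 hu.2)] at e1
      have e2 := hF1 u t
      rw [hFt, hta, abs_of_nonneg (sub_nonneg.2 hu.1)] at e2
      rw [abs_le] at e1 e2
      linarith [e1.1, e1.2, e2.1, e2.2]
  -- F fixes each right endpoint
  have hFb : ∀ n, F (b n) = b n := by
    intro n
    rcases hdich n with hid | hrefl
    · exact hid (b n) ⟨(hlt n).le, le_refl _⟩
    · exfalso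
      have h1 : F (b n) = a n := by
        rw [hrefl (b n) ⟨(hlt n).le, le_refl _⟩]; ring
      have hmem : a (m n) ∈ Set.Icc (a (m n)) (b (m n)) := ⟨le_refl _, (hlt (m n)).le⟩
      have h2 : F (a (m n)) = a (m n) ∨ F (a (m n)) = b (m n) := by
        rcases hdich (m n) with h | h
        · exact Or.inl (h _ hmem)
        · right; rw [h _ hmem]; ring
      have h3 := hF1 (a (m n)) (b n)
      rw [h1, abs_of_pos (sub_pos.2 (hm n))] at h3
      have h4 := hlt n
      have h5 := hlt (m n)
      have h6 := hm n
      rcases h2 with h2 | h2 <;> rw [h2] at h3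
      · rw [abs_of_pos (by linarith : (0:ℝ) < a (m n) - a n)] at h3; linarith
      · rw [abs_of_pos (by linarith : (0:ℝ) < b (m n) - a n)] at h3; linarith
  -- F is the identity on each interval
  have hFIcc : ∀ n, ∀ u ∈ Set.Icc (a n) (b n), F u = u := by
    intro n
    rcases hdich n with hid | hrefl
    · exact hid
    · exfalso
      have h1 : F (b n) = a n := by
        rw [hrefl (b n) ⟨(hlt n).le, le_refl _⟩]; ring
      rw [hFb n] at h1
      exact absurd h1 (ne_of_gt (hlt n))
  -- F is the identity on each gap closure
  have hFgap : ∀ n, ∀ u ∈ Set.Icc (b n) (a (m n)), F u = u := by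
    intro n u hu
    have h1 : F (b n) = b n := hFb n
    have h2 : F (a (m n)) = a (m n) := hFIcc (m n) _ ⟨le_refl _, (hlt (m n)).le⟩
    have e1 := hF1 u (b n)
    rw [h1, abs_of_nonneg (sub_nonneg.2 hu.1)] at e1
    have e2 := hF1 u (a (m n))
    rw [h2, abs_sub_comm u (a (m n)), abs_of_nonneg (sub_nonneg.2 hu.2)] at e2
    rw [abs_le] at e1 e2
    linarith [e1.1, e1.2, e2.1, e2.2]
  -- conclusion
  intro x hx
  have hFx : F x = x := by
    obtain ⟨n, h | h⟩ := hXsub2 x hx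
    · exact hFIcc n x h
    · exact hFgap n x ⟨h.1.le, h.2.le⟩
  rw [hFeqX hx, hFx]
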